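/- Let ℋ be a Hardy field and let f : ℝ → ℝ be a function whose germ at +∞ belongs to ℋ and which has polynomial growth. If f(n) ∈ ℤ for every sufficiently large natural number n, then f eventually agrees with a real polynomial: there exists p ∈ ℝ[X] such that f(t) = p(t) for all sufficiently large t (i.e., the germ of f at +∞ equals the germ of the polynomial function p). (Lemma A.1 of the paper.) -/

import Mathlib

open Filter Topology

/-- The ring of germs at `+∞` of functions `ℝ → ℝ`. -/
abbrev RGerm : Type := Filter.Germ (Filter.atTop : Filter ℝ) ℝ

/-- A **Hardy field** is a subring of the ring of germs at `+∞` of functions `ℝ → ℝ` which is a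
field (every nonzero germ has a multiplicative inverse in it) and is closed under
differentiation (every germ has a representative which is eventually differentiable and whose
derivative again has germ in the subring). -/
def IsHardyField (H : Subring RGerm) : Prop :=
  (∀ g ∈ H, g ≠ 0 → ∃ h ∈ H, g * h = 1) ∧
  (∀ g ∈ H, ∃ f : ℝ → ℝ, (f : RGerm) = g ∧
    (∀ᶠ t in atTop, DifferentiableAt ℝ f t) ∧ ((deriv f : ℝ → ℝ) : RGerm) ∈ H)

/-- `f ≺ g` : `f(t)/g(t) → 0` as `t → ∞`. -/
def GrowsSlower (f g : ℝ → ℝ) : Prop := Tendsto (fun t => f t / g t) atTop (nhds 0)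

/-- `f ≪ g` : there are `C > 0` and `t₀` with `|f(t)| ≤ C·g(t)` for all `t ≥ t₀`. -/
def BigO (f g : ℝ → ℝ) : Prop := ∃ C > (0 : ℝ), ∀ᶠ t in atTop, |f t| ≤ C * g t

/-- `f` has polynomial growth: `|f(t)| ≪ t^d` for some `d ∈ ℕ`. -/
def PolyGrowth (f : ℝ → ℝ) : Prop := ∃ d : ℕ, BigO f (fun t => t ^ d)




noncomputable def fdiff (g : ℝ → ℝ) : ℝ → ℝ := fun x => g (x + 1) - g x

lemma fdiff_iterate_sub (k : ℕ) : ∀ (u v : ℝ → ℝ) (x : ℝ),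
    fdiff^[k] (fun t => u t - v t) x = fdiff^[k] u x - fdiff^[k] v x := by
  induction k with
  | zero => intro u v x; simp
  | succ k ih =>
    intro u v x
    have h : fdiff (fun t => u t - v t) = fun t => fdiff u t - fdiff v t := by
      funext t; simp [fdiff]; ring
    rw [Function.iterate_succ_apply, h, ih, Function.iterate_succ_apply,
      Function.iterate_succ_apply]

lemma fdiff_congr (k : ℕ) : ∀ (u v : ℝ → ℝ) (A : ℝ), (∀ t, A ≤ t → u t = v t) →
    ∀ x, A ≤ x → fdiff^[k] u x = fdiff^[k] v x := by
  induction k with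
  | zero => intro u v A h x hx; simpa using h x hx
  | succ k ih =>
    intro u v A h x hx
    rw [Function.iterate_succ_apply, Function.iterate_succ_apply]
    exact ih _ _ A (fun t ht => by simp only [fdiff]; rw [h t ht, h (t+1) (by linarith)]) x hx

lemma fdiff_vanish (k : ℕ) : ∀ (u : ℝ → ℝ) (x : ℝ), (∀ j : ℕ, j ≤ k → u (x + j) = 0) →
    fdiff^[k] u x = 0 := by
  induction k with
  | zero => intro u x h; simpa using h 0 le_rfl
  | succ k ih =>
    intro u x h
    rw [Function.iterate_succ_apply]
    refine ih _ x fun j hj => ?_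
    simp only [fdiff]
    have h1 := h (j+1) (by omega)
    have h2 := h j (by omega)
    have e : x + (j:ℝ) + 1 = x + ((j:ℕ)+1 : ℕ) := by push_cast; ring
    rw [e, h1, h2, sub_zero]

lemma fdiff_int (f : ℝ → ℝ) (n₀ : ℕ) (h : ∀ n : ℕ, n₀ ≤ n → ∃ z : ℤ, f n = z) :
    ∀ k, ∀ n : ℕ, n₀ ≤ n → ∃ z : ℤ, fdiff^[k] f n = z := by
  intro k
  induction k with
  | zero => intro n hn; simpa using h n hn
  | succ k ih =>
    intro n hn
    obtain ⟨z1, hz1⟩ := ih (n+1) (by omega)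
    obtain ⟨z2, hz2⟩ := ih n hn
    refine ⟨z1 - z2, ?_⟩
    rw [Function.iterate_succ_apply']
    simp only [fdiff]
    have e : (n:ℝ) + 1 = ((n+1 : ℕ) : ℝ) := by push_cast; ring
    rw [e, hz1, hz2]; push_cast; ring

lemma fdiff_mvt (k : ℕ) : ∀ (F : ℕ → ℝ → ℝ) (a : ℝ),
    (∀ j, j < k → ∀ t, a ≤ t → HasDerivAt (F j) (F (j+1) t) t) →
    ∀ x, a ≤ x → ∃ ξ, x ≤ ξ ∧ ξ ≤ x + k ∧ fdiff^[k] (F 0) x = F k ξ := by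
  induction k with
  | zero => intro F a _ x hx; exact ⟨x, le_rfl, by simp, by simp⟩
  | succ k ih =>
    intro F a hF x hx
    have hF' : ∀ j, j < k → ∀ t, a ≤ t → HasDerivAt (fdiff (F j)) (fdiff (F (j+1)) t) t := by
      intro j hj t ht
      have h1 : HasDerivAt (fun s : ℝ => F j (s + 1)) (F (j+1) (t+1)) t := by
        have := HasDerivAt.comp t (hF j (by omega) (t+1) (by linarith))
          ((hasDerivAt_id t).add_const 1)
        simp at this; exact this
      have h2 := hF j (by omega) t ht
      exact h1.sub h2
    obtain ⟨ξ, hξ1, hξ2, hξ3⟩ := ih (fun j => fdiff (F j)) a hF' x hx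
    have hmvt := exists_hasDerivAt_eq_slope (F k) (F (k+1)) (show ξ < ξ + 1 by linarith)
      (fun y hy => (hF k (by omega) y (by rcases hy with ⟨h1, h2⟩; linarith)).continuousAt.continuousWithinAt)
      (fun y hy => hF k (by omega) y (by rcases hy with ⟨h1, h2⟩; linarith))
    obtain ⟨c, hc, hceq⟩ := hmvt
    refine ⟨c, ?_, ?_, ?_⟩
    · rcases hc with ⟨h1, _⟩; linarith
    · rcases hc with ⟨_, h2⟩; push_cast; linarith
    · rw [Function.iterate_succ_apply]
      have : fdiff (F 0) = fdiff (F 0) := rfl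
      rw [show fdiff^[k] (fdiff (F 0)) x = fdiff (F k) ξ from hξ3]
      rw [hceq]
      simp [fdiff]

lemma fdiff_poly (k : ℕ) : ∀ q : Polynomial ℝ, q.degree < (k : ℕ) →
    ∀ x, fdiff^[k] (fun t => q.eval t) x = 0 := by
  induction k with
  | zero => intro q hq x
            have : q = 0 := Polynomial.degree_eq_bot.mp (Nat.WithBot.lt_zero_iff.mp (by simpa using hq))
            simp [this]
  | succ k ih =>
    intro q hq x
    set r : Polynomial ℝ := q.comp (Polynomial.X + Polynomial.C 1) - q with hr
    have hfd : fdiff (fun t => q.eval t) = fun t => r.eval t := by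
      funext t
      simp [fdiff, hr, Polynomial.eval_comp]
    have hrdeg : r.degree < (k : ℕ) := by
      by_cases hq0 : q = 0
      · simp [hr, hq0]
      · have hlc : (q.comp (Polynomial.X + Polynomial.C 1)).leadingCoeff = q.leadingCoeff := by
          rw [Polynomial.leadingCoeff_comp
            (by rw [Polynomial.natDegree_X_add_C]; exact one_ne_zero)]
          rw [Polynomial.leadingCoeff_X_add_C, one_pow, mul_one]
        have hnd : (q.comp (Polynomial.X + Polynomial.C 1)).natDegree = q.natDegree := by
          rw [← Polynomial.taylor_apply, Polynomial.natDegree_taylor]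
        have hc0 : q.comp (Polynomial.X + Polynomial.C 1) ≠ 0 := fun h => hq0
          (Polynomial.leadingCoeff_eq_zero.mp (by rw [← hlc, h, Polynomial.leadingCoeff_zero]))
        have hdeq : (q.comp (Polynomial.X + Polynomial.C 1)).degree = q.degree := by
          rw [Polynomial.degree_eq_natDegree hc0, Polynomial.degree_eq_natDegree hq0, hnd]
        have hlt := Polynomial.degree_sub_lt hdeq hc0 hlc
        rw [hdeq] at hlt
        have hqk : q.degree ≤ (k : ℕ) := by
          have h1 : q.natDegree < k + 1 := (Polynomial.natDegree_lt_iff_degree_lt hq0).mpr hq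
          calc q.degree ≤ (q.natDegree : WithBot ℕ) := Polynomial.degree_le_natDegree
            _ ≤ (k : ℕ) := by exact_mod_cast Nat.lt_succ_iff.mp h1
        exact lt_of_lt_of_le hlt hqk
    rw [Function.iterate_succ_apply, hfd]
    exact ih r hrdeg x

lemma landau_bound (g g' : ℝ → ℝ) (c : ℝ)
    (hd : ∀ t, c ≤ t → HasDerivAt g (g' t) t)
    (hm : MonotoneOn g' (Set.Ici c) ∨ AntitoneOn g' (Set.Ici c))
    (t h : ℝ) (h0 : 0 < h) (hth : c ≤ t - h) :
    |g' t| * h ≤ max |g (t+h) - g t| |g t - g (t-h)| := by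
  have htc : c ≤ t := by linarith
  have hcont : ∀ a b : ℝ, c ≤ a → ContinuousOn g (Set.Icc a b) :=
    fun a b ha => fun y hy => (hd y (by rcases hy with ⟨h1,_⟩; linarith)).continuousAt.continuousWithinAt
  obtain ⟨ξp, hξp, hξpeq⟩ := exists_hasDerivAt_eq_slope g g' (show t < t + h by linarith)
    (hcont t (t+h) htc) (fun y hy => hd y (by rcases hy with ⟨h1,_⟩; linarith))
  obtain ⟨ξm, hξm, hξmeq⟩ := exists_hasDerivAt_eq_slope g g' (show t - h < t by linarith)
    (hcont (t-h) t hth) (fun y hy => hd y (by rcases hy with ⟨h1,_⟩; linarith))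
  have hep : g' ξp * h = g (t+h) - g t := by
    rw [hξpeq, show t + h - t = h by ring, div_mul_cancel₀ _ h0.ne']
  have hem : g' ξm * h = g t - g (t-h) := by
    rw [hξmeq, show t - (t - h) = h by ring, div_mul_cancel₀ _ h0.ne']
  set M := max |g (t+h) - g t| |g t - g (t-h)| with hM
  have h1 : g' ξp * h ≤ M := by
    rw [hep]; exact le_trans (le_abs_self _) (le_max_left _ _)
  have h2 : -(g' ξm * h) ≤ M := by
    rw [hem]; exact le_trans (neg_le_abs _) (le_max_right _ _)
  have h3 : -(g' ξp * h) ≤ M := by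
    rw [hep]; exact le_trans (neg_le_abs _) (le_max_left _ _)
  have h4 : g' ξm * h ≤ M := by
    rw [hem]; exact le_trans (le_abs_self _) (le_max_right _ _)
  have hξpIci : ξp ∈ Set.Ici c := by rcases hξp with ⟨a, b⟩; simp only [Set.mem_Ici]; linarith
  have hξmIci : ξm ∈ Set.Ici c := by rcases hξm with ⟨a, b⟩; simp only [Set.mem_Ici]; linarith
  have htIci : t ∈ Set.Ici c := Set.mem_Ici.mpr htc
  have key : |g' t * h| ≤ M := by
    rw [abs_le]
    rcases hm with hmono | hanti
    · have hl := hmono hξmIci htIci (by rcases hξm with ⟨a,b⟩; linarith)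
      have hu := hmono htIci hξpIci (by rcases hξp with ⟨a,b⟩; linarith)
      constructor
      · nlinarith [mul_le_mul_of_nonneg_right hl h0.le]
      · nlinarith [mul_le_mul_of_nonneg_right hu h0.le]
    · have hl := hanti hξmIci htIci (by rcases hξm with ⟨a,b⟩; linarith)
      have hu := hanti htIci hξpIci (by rcases hξp with ⟨a,b⟩; linarith)
      constructor
      · nlinarith [mul_le_mul_of_nonneg_right hu h0.le]
      · nlinarith [mul_le_mul_of_nonneg_right hl h0.le]
  calc |g' t| * h = |g' t * h| := by rw [abs_mul, abs_of_pos h0]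
    _ ≤ M := key

lemma sign_const (g : ℝ → ℝ) (c : ℝ) (hc : ContinuousOn g (Set.Ici c))
    (hnz : ∀ t, c ≤ t → g t ≠ 0) :
    (∀ t, c ≤ t → 0 < g t) ∨ (∀ t, c ≤ t → g t < 0) := by
  rcases (hnz c le_rfl).lt_or_gt with hneg | hpos
  · right
    intro t ht
    by_contra hcon
    push_neg at hcon
    have hpos' : 0 < g t := lt_of_le_of_ne hcon (Ne.symm (hnz t ht))
    have := intermediate_value_Icc ht (hc.mono Set.Icc_subset_Ici_self)
    obtain ⟨x, hx, hx0⟩ := this ⟨hneg.le, hpos'.le⟩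
    exact hnz x hx.1 hx0
  · left
    intro t ht
    by_contra hcon
    push_neg at hcon
    have hneg' : g t < 0 := lt_of_le_of_ne hcon (hnz t ht)
    have := intermediate_value_Icc' ht (hc.mono Set.Icc_subset_Ici_self)
    obtain ⟨x, hx, hx0⟩ := this ⟨hneg'.le, hpos.le⟩
    exact hnz x hx.1 hx0

/-- Existence of an infinite chain of derivatives with germs in the Hardy field. -/
lemma hardy_chain_exists (H : Subring RGerm) (hH : IsHardyField H)
    (f : ℝ → ℝ) (hf : (f : RGerm) ∈ H) :
    ∃ g : ℕ → ℝ → ℝ, (f =ᶠ[atTop] g 0) ∧ (∀ k, ((g k : ℝ → ℝ) : RGerm) ∈ H) ∧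
      (∀ k, ∀ᶠ t in atTop, HasDerivAt (g k) (g (k+1) t) t) := by
  classical
  let P : (ℝ → ℝ) → Prop := fun u =>
    ((u : RGerm) ∈ H) ∧ (∀ᶠ t in atTop, DifferentiableAt ℝ u t) ∧
      (((deriv u : ℝ → ℝ) : RGerm) ∈ H)
  obtain ⟨f₀, hf₀eq, hf₀diff, hf₀der⟩ := hH.2 _ hf
  have hPf₀ : P f₀ := ⟨by rw [hf₀eq]; exact hf, hf₀diff, hf₀der⟩
  have step : ∀ u : ℝ → ℝ, P u → ∃ v : ℝ → ℝ, P v ∧ deriv u =ᶠ[atTop] v := by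
    intro u hu
    obtain ⟨v, hveq, hvdiff, hvder⟩ := hH.2 _ hu.2.2
    exact ⟨v, ⟨by rw [hveq]; exact hu.2.2, hvdiff, hvder⟩, (Filter.Germ.coe_eq.mp hveq).symm⟩
  choose nxt hnxtP hnxtEq using step
  let G : ℕ → {u : ℝ → ℝ // P u} := fun k =>
    Nat.rec ⟨f₀, hPf₀⟩ (fun _ p => ⟨nxt p.1 p.2, hnxtP p.1 p.2⟩) k
  refine ⟨fun k => (G k).1, ?_, fun k => (G k).2.1, ?_⟩
  · exact (Filter.Germ.coe_eq.mp hf₀eq).symm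
  · intro k
    have hsucc : deriv (G k).1 =ᶠ[atTop] (G (k+1)).1 := hnxtEq (G k).1 (G k).2
    filter_upwards [(G k).2.2.1, hsucc] with t h1 h2
    have := h1.hasDerivAt
    rwa [h2] at this

theorem hardy_integer_valued_eventually_polynomial
    (H : Subring RGerm) (hH : IsHardyField H)
    (f : ℝ → ℝ) (hf : (f : RGerm) ∈ H) (hgrowth : PolyGrowth f)
    (hint : ∃ n₀ : ℕ, ∀ n : ℕ, n₀ ≤ n → ∃ z : ℤ, f n = z) :
    ∃ p : Polynomial ℝ, ∀ᶠ t in atTop, f t = p.eval t := by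
  classical
  obtain ⟨d, C, hC, hCf⟩ : ∃ d C, 0 < C ∧ ∀ᶠ t in atTop, |f t| ≤ C * t ^ d := by
    obtain ⟨d, C, hC, h⟩ := hgrowth
    exact ⟨d, C, hC, h⟩
  obtain ⟨n₀, hn₀⟩ := hint
  obtain ⟨gs, hfg0, hgH, hgd⟩ := hardy_chain_exists H hH f hf
  -- a common threshold `A`
  have hall : ∀ᶠ t in atTop, (f t = gs 0 t ∧ |f t| ≤ C * t^d) ∧
      ∀ k ∈ Finset.range (d+4), HasDerivAt (gs k) (gs (k+1) t) t :=
    (hfg0.and hCf).and ((Filter.eventually_all_finset _).mpr fun k _ => hgd k)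
  obtain ⟨A₀, hA₀⟩ := eventually_atTop.mp hall
  set A := max A₀ 1 with hAdef
  have hA1 : (1:ℝ) ≤ A := le_max_right _ _
  have hfg : ∀ t, A ≤ t → f t = gs 0 t :=
    fun t ht => ((hA₀ t (le_trans (le_max_left _ _) ht)).1).1
  have hfb : ∀ t, A ≤ t → |f t| ≤ C * t^d :=
    fun t ht => ((hA₀ t (le_trans (le_max_left _ _) ht)).1).2
  have hder : ∀ k, k ≤ d+3 → ∀ t, A ≤ t → HasDerivAt (gs k) (gs (k+1) t) t :=
    fun k hk t ht => (hA₀ t (le_trans (le_max_left _ _) ht)).2 k (Finset.mem_range.mpr (by omega))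
  -- each `gs j` is eventually monotone or antitone
  have mono : ∀ j, j ≤ d+2 → ∃ c, A ≤ c ∧
      (MonotoneOn (gs j) (Set.Ici c) ∨ AntitoneOn (gs j) (Set.Ici c)) := by
    intro j hj
    by_cases h0 : ((gs (j+1) : ℝ → ℝ) : RGerm) = 0
    · have hev : gs (j+1) =ᶠ[atTop] (fun _ => (0:ℝ)) := by
        apply Filter.Germ.coe_eq.mp
        rw [h0]
        exact (Filter.Germ.coe_zero).symm
      obtain ⟨c₀, hc₀⟩ := eventually_atTop.mp hev
      refine ⟨max c₀ A, le_max_right _ _, Or.inl ?_⟩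
      apply monotoneOn_of_deriv_nonneg (convex_Ici _)
      · intro x hx
        exact (hder j (by omega) x (le_trans (le_max_right _ _) hx)).continuousAt.continuousWithinAt
      · intro x hx
        rw [interior_Ici] at hx
        exact (hder j (by omega) x (le_trans (le_max_right _ _) hx.le)).differentiableAt.differentiableWithinAt
      · intro x hx
        rw [interior_Ici] at hx
        rw [(hder j (by omega) x (le_trans (le_max_right _ _) hx.le)).deriv]
        rw [hc₀ x (le_trans (le_max_left _ _) hx.le)]
    · obtain ⟨hinv, hinvH, hone⟩ := hH.1 _ (hgH (j+1)) h0
      obtain ⟨u, hu⟩ := Quotient.exists_rep hinv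
      have huc : (u : RGerm) = hinv := hu
      have hev : ∀ᶠ t in atTop, gs (j+1) t * u t = 1 := by
        have h1 : ((gs (j+1) * u : ℝ → ℝ) : RGerm) = 1 := by
          rw [Filter.Germ.coe_mul, huc, hone]
        have h2 := Filter.Germ.coe_eq.mp (h1.trans (Filter.Germ.coe_one).symm)
        filter_upwards [h2] with t ht using ht
      have hnz : ∀ᶠ t in atTop, gs (j+1) t ≠ 0 := by
        filter_upwards [hev] with t ht
        intro h; rw [h, zero_mul] at ht; exact zero_ne_one ht
      obtain ⟨c₀, hc₀⟩ := eventually_atTop.mp hnz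
      have hcA : A ≤ max c₀ A := le_max_right _ _
      have hcont : ContinuousOn (gs (j+1)) (Set.Ici (max c₀ A)) := fun x hx =>
        (hder (j+1) (by omega) x (le_trans hcA hx)).continuousAt.continuousWithinAt
      rcases sign_const (gs (j+1)) (max c₀ A) hcont
          (fun t ht => hc₀ t (le_trans (le_max_left _ _) ht)) with hpos | hneg
      · refine ⟨max c₀ A, hcA, Or.inl ?_⟩
        apply monotoneOn_of_deriv_nonneg (convex_Ici _)
        · intro x hx
          exact (hder j (by omega) x (le_trans hcA hx)).continuousAt.continuousWithinAt
        · intro x hx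
          rw [interior_Ici] at hx
          exact (hder j (by omega) x (le_trans hcA hx.le)).differentiableAt.differentiableWithinAt
        · intro x hx
          rw [interior_Ici] at hx
          rw [(hder j (by omega) x (le_trans hcA hx.le)).deriv]
          exact (hpos x hx.le).le
      · refine ⟨max c₀ A, hcA, Or.inr ?_⟩
        apply antitoneOn_of_deriv_nonpos (convex_Ici _)
        · intro x hx
          exact (hder j (by omega) x (le_trans hcA hx)).continuousAt.continuousWithinAt
        · intro x hx
          rw [interior_Ici] at hx
          exact (hder j (by omega) x (le_trans hcA hx.le)).differentiableAt.differentiableWithinAt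
        · intro x hx
          rw [interior_Ici] at hx
          rw [(hder j (by omega) x (le_trans hcA hx.le)).deriv]
          exact (hneg x hx.le).le
  -- polynomial growth of the iterated derivatives
  have growth : ∀ k, k ≤ d → ∃ C' b, 0 < C' ∧ A ≤ b ∧ 1 ≤ b ∧
      ∀ t, b ≤ t → |gs k t| ≤ C' * t ^ (d - k) := by
    intro k
    induction k with
    | zero =>
      intro _
      exact ⟨C, A, hC, le_rfl, hA1, fun t ht => by rw [← hfg t ht]; simpa using hfb t ht⟩
    | succ k ih =>
      intro hk
      obtain ⟨C', b, hC', hbA, hb1, hbd⟩ := ih (by omega)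
      obtain ⟨c, hcA, hmono⟩ := mono (k+1) (by omega)
      have hmono' : MonotoneOn (gs (k+1)) (Set.Ici (max b c)) ∨
          AntitoneOn (gs (k+1)) (Set.Ici (max b c)) := by
        rcases hmono with h|h
        exacts [Or.inl (h.mono (Set.Ici_subset_Ici.mpr (le_max_right _ _))),
          Or.inr (h.mono (Set.Ici_subset_Ici.mpr (le_max_right _ _)))]
      have hb'A : A ≤ max b c := le_trans hbA (le_max_left _ _)
      have hb'1 : (1:ℝ) ≤ max b c := le_trans hb1 (le_max_left _ _)
      set m := d - (k+1) with hm
      have hdk : d - k = m + 1 := by omega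
      refine ⟨4 * C' * (3/2)^(m+1), 2 * max b c, by positivity, by linarith, by linarith, ?_⟩
      intro t ht
      have ht0 : (0:ℝ) < t := by linarith
      have hld := landau_bound (gs k) (gs (k+1)) (max b c)
        (fun s hs => hder k (by omega) s (le_trans hb'A hs)) hmono'
        t (t/2) (by linarith) (by linarith)
      have hbound : ∀ x : ℝ, b ≤ x → x ≤ 3*t/2 → |gs k x| ≤ C' * (3*t/2)^(m+1) := by
        intro x hx1 hx2
        calc |gs k x| ≤ C' * x^(d-k) := hbd x hx1
          _ ≤ C' * (3*t/2)^(d-k) := by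
              apply mul_le_mul_of_nonneg_left _ hC'.le
              exact pow_le_pow_left₀ (by linarith) hx2 _
          _ = C' * (3*t/2)^(m+1) := by rw [hdk]
      have hblemax : b ≤ max b c := le_max_left _ _
      have e1 : |gs k (t + t/2) - gs k t| ≤ 2 * (C' * (3*t/2)^(m+1)) := by
        have h1 := hbound (t + t/2) (by linarith) (by linarith)
        have h2 := hbound t (by linarith) (by linarith)
        calc |gs k (t + t/2) - gs k t| ≤ |gs k (t+t/2)| + |gs k t| := abs_sub _ _
          _ ≤ 2 * (C' * (3*t/2)^(m+1)) := by linarith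
      have e2 : |gs k t - gs k (t - t/2)| ≤ 2 * (C' * (3*t/2)^(m+1)) := by
        have h1 := hbound t (by linarith) (by linarith)
        have h2 := hbound (t - t/2) (by linarith) (by linarith)
        calc |gs k t - gs k (t - t/2)| ≤ |gs k t| + |gs k (t - t/2)| := abs_sub _ _
          _ ≤ 2 * (C' * (3*t/2)^(m+1)) := by linarith
      have key : |gs (k+1) t| * (t/2) ≤ 2 * (C' * (3*t/2)^(m+1)) :=
        le_trans hld (max_le e1 e2)
      have hp : (3*t/2)^(m+1) = (3/2)^(m+1) * t^(m+1) := by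
        rw [← mul_pow]; ring_nf
      have htm : t^(m+1) = t^m * t := pow_succ t m
      rw [hp, htm] at key
      nlinarith [key, pow_nonneg ht0.le m, pow_pos (by norm_num : (0:ℝ) < 3/2) (m+1),
        abs_nonneg (gs (k+1) t)]
  -- the (d+1)-st derivative is eventually smaller than 1/2
  have hsmall : ∃ B, A ≤ B ∧ ∀ t, B ≤ t → |gs (d+1) t| < 1/2 := by
    obtain ⟨C', b, hC', hbA, hb1, hbd⟩ := growth d le_rfl
    obtain ⟨c, hcA, hmono⟩ := mono (d+1) (by omega)
    have hmono' : MonotoneOn (gs (d+1)) (Set.Ici (max b c)) ∨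
        AntitoneOn (gs (d+1)) (Set.Ici (max b c)) := by
      rcases hmono with h|h
      exacts [Or.inl (h.mono (Set.Ici_subset_Ici.mpr (le_max_right _ _))),
        Or.inr (h.mono (Set.Ici_subset_Ici.mpr (le_max_right _ _)))]
    have hb'A : A ≤ max b c := le_trans hbA (le_max_left _ _)
    have hb'1 : (1:ℝ) ≤ max b c := le_trans hb1 (le_max_left _ _)
    refine ⟨max (2 * max b c) (16*C'+1), by
      have := le_max_left (2 * max b c) (16*C'+1); linarith, ?_⟩
    intro t ht
    have h1 : 2 * max b c ≤ t := le_trans (le_max_left _ _) ht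
    have h2 : 16*C'+1 ≤ t := le_trans (le_max_right _ _) ht
    have ht0 : (0:ℝ) < t := by linarith
    have hld := landau_bound (gs d) (gs (d+1)) (max b c)
      (fun s hs => hder d (by omega) s (le_trans hb'A hs)) hmono'
      t (t/2) (by linarith) (by linarith)
    have hbound : ∀ x : ℝ, b ≤ x → |gs d x| ≤ C' := by
      intro x hx
      have := hbd x hx
      simpa using this
    have hblemax : b ≤ max b c := le_max_left _ _
    have e1 : |gs d (t + t/2) - gs d t| ≤ 2 * C' := by
      have h3 := hbound (t + t/2) (by linarith)
      have h4 := hbound t (by linarith)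
      calc |gs d (t + t/2) - gs d t| ≤ |gs d (t+t/2)| + |gs d t| := abs_sub _ _
        _ ≤ 2 * C' := by linarith
    have e2 : |gs d t - gs d (t - t/2)| ≤ 2 * C' := by
      have h3 := hbound t (by linarith)
      have h4 := hbound (t - t/2) (by linarith)
      calc |gs d t - gs d (t - t/2)| ≤ |gs d t| + |gs d (t - t/2)| := abs_sub _ _
        _ ≤ 2 * C' := by linarith
    have key : |gs (d+1) t| * (t/2) ≤ 2 * C' := le_trans hld (max_le e1 e2)
    nlinarith [abs_nonneg (gs (d+1) t)]
  obtain ⟨B, hBA, hB⟩ := hsmall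
  -- iterated finite differences of f at large integers vanish
  set N : ℕ := max n₀ (⌈max A B⌉₊ + 1) with hNdef
  have hNA : A ≤ (N:ℝ) := by
    have h1 : max A B ≤ (⌈max A B⌉₊ : ℝ) := Nat.le_ceil _
    have h2 : (⌈max A B⌉₊ : ℝ) + 1 ≤ (N:ℝ) := by
      have : (⌈max A B⌉₊ + 1 : ℕ) ≤ N := le_max_right _ _
      exact_mod_cast this
    have := le_max_left A B
    linarith
  have hNB : B ≤ (N:ℝ) := by
    have h1 : max A B ≤ (⌈max A B⌉₊ : ℝ) := Nat.le_ceil _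
    have h2 : (⌈max A B⌉₊ + 1 : ℕ) ≤ N := le_max_right _ _
    have h2' : ((⌈max A B⌉₊ : ℝ) + 1) ≤ (N:ℝ) := by exact_mod_cast h2
    have := le_max_right A B
    linarith
  have hNn₀ : n₀ ≤ N := le_max_left _ _
  have hΔ0 : ∀ n : ℕ, N ≤ n → fdiff^[d+1] f ↑n = 0 := by
    intro n hn
    have hnA : A ≤ (n:ℝ) := le_trans hNA (by exact_mod_cast hn)
    have hnB : B ≤ (n:ℝ) := le_trans hNB (by exact_mod_cast hn)
    have hcongr := fdiff_congr (d+1) f (gs 0) A hfg ↑n hnA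
    obtain ⟨ξ, hξ1, hξ2, hξ3⟩ := fdiff_mvt (d+1) gs A
      (fun j hj t ht => hder j (by omega) t ht) ↑n hnA
    have hsz : |fdiff^[d+1] f ↑n| < 1/2 := by
      rw [hcongr, hξ3]
      exact hB ξ (le_trans hnB hξ1)
    obtain ⟨z, hz⟩ := fdiff_int f n₀ hn₀ (d+1) n (le_trans hNn₀ hn)
    rw [hz] at hsz ⊢
    have hz1 : |z| < 1 := by
      have : |(z:ℝ)| < 1 := by linarith
      exact_mod_cast (by rwa [← Int.cast_abs] at this : ((|z| : ℤ) : ℝ) < 1)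
    have : z = 0 := by have := abs_lt.mp hz1; omega
    rw [this]; norm_num
  -- the interpolating polynomial
  set v : ℕ → ℝ := fun i => ((N + i : ℕ) : ℝ) with hvdef
  have hvinj : Set.InjOn v ↑(Finset.range (d+1)) := by
    intro i _ j _ h
    simp only [hvdef] at h
    have : (N + i : ℕ) = (N + j : ℕ) := by exact_mod_cast h
    omega
  set q := Lagrange.interpolate (Finset.range (d+1)) v (fun i => f (v i)) with hqdef
  have hqdeg : q.degree < ((d+1 : ℕ) : WithBot ℕ) := by
    have := Lagrange.degree_interpolate_lt (fun i => f (v i)) hvinj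
    rwa [Finset.card_range] at this
  have hqval : ∀ j, j ≤ d → f (((N+j : ℕ) : ℝ)) - q.eval (((N+j : ℕ) : ℝ)) = 0 := by
    intro j hj
    have := Lagrange.eval_interpolate_at_node (fun i => f (v i)) hvinj
      (Finset.mem_range.mpr (by omega : j < d+1))
    simp only [hvdef] at this
    rw [sub_eq_zero]
    exact this.symm
  -- f agrees with q at all integers ≥ N
  have key : ∀ k, k ≤ d+1 → ∀ n : ℕ, N ≤ n →
      fdiff^[d+1-k] (fun t => f t - q.eval t) ↑n = 0 := by
    intro k
    induction k with
    | zero =>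
      intro _ n hn
      rw [Nat.sub_zero, fdiff_iterate_sub]
      rw [hΔ0 n hn, fdiff_poly (d+1) q hqdeg]
      ring
    | succ k ih =>
      intro hk
      have ihh := ih (by omega)
      have hm1 : (d+1-(k+1)) + 1 = d+1-k := by omega
      intro n hn
      induction n, hn using Nat.le_induction with
      | base =>
        apply fdiff_vanish
        intro j hj
        have hcast : (N:ℝ) + (j:ℕ) = ((N + j : ℕ) : ℝ) := by push_cast; ring
        rw [hcast]
        exact hqval j (by omega)
      | succ n hn2 ih2 =>
        have h1 := ihh n hn2
        rw [← hm1, Function.iterate_succ_apply'] at h1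
        simp only [fdiff] at h1
        have hcast : (n:ℝ) + 1 = ((n+1 : ℕ) : ℝ) := by push_cast; ring
        rw [hcast] at h1
        rw [ih2] at h1
        linarith
  have heN : ∀ n : ℕ, N ≤ n → f ↑n - q.eval ↑n = 0 := by
    intro n hn
    have := key (d+1) le_rfl n hn
    simpa using this
  -- the Rolle cascade
  set E : ℕ → ℝ → ℝ := fun k t => gs k t - Polynomial.eval t ((⇑Polynomial.derivative)^[k] q)
    with hEdef
  have hEder : ∀ k, k ≤ d+2 → ∀ t, A ≤ t → HasDerivAt (E k) (E (k+1) t) t := by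
    intro k hk t ht
    have h1 := hder k (by omega) t ht
    have h2 := Polynomial.hasDerivAt ((⇑Polynomial.derivative)^[k] q) t
    have h3 := h1.sub h2
    simp only [hEdef]
    rw [Function.iterate_succ_apply']
    exact h3
  have zer : ∀ k, k ≤ d+1 → ∀ M : ℝ, ∃ x, M ≤ x ∧ A ≤ x ∧ E k x = 0 := by
    intro k
    induction k with
    | zero =>
      intro _ M
      refine ⟨((max N ⌈max M A⌉₊ : ℕ) : ℝ), ?_, ?_, ?_⟩
      · have h1 : M ≤ max M A := le_max_left _ _
        have h2 : max M A ≤ (⌈max M A⌉₊ : ℝ) := Nat.le_ceil _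
        have h3 : (⌈max M A⌉₊ : ℕ) ≤ max N ⌈max M A⌉₊ := le_max_right _ _
        have h3' : ((⌈max M A⌉₊ : ℕ) : ℝ) ≤ ((max N ⌈max M A⌉₊ : ℕ) : ℝ) := by exact_mod_cast h3
        linarith
      · have h1 : A ≤ max M A := le_max_right _ _
        have h2 : max M A ≤ (⌈max M A⌉₊ : ℝ) := Nat.le_ceil _
        have h3' : ((⌈max M A⌉₊ : ℕ) : ℝ) ≤ ((max N ⌈max M A⌉₊ : ℕ) : ℝ) := by
          exact_mod_cast (le_max_right N ⌈max M A⌉₊)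
        linarith
      · have hge : N ≤ max N ⌈max M A⌉₊ := le_max_left _ _
        have hA' : A ≤ ((max N ⌈max M A⌉₊ : ℕ) : ℝ) :=
          le_trans hNA (by exact_mod_cast hge)
        simp only [hEdef, Function.iterate_zero_apply]
        rw [← hfg _ hA']
        exact heN _ hge
    | succ k ih =>
      intro hk M
      obtain ⟨x₁, hx₁M, hx₁A, hx₁0⟩ := ih (by omega) M
      obtain ⟨x₂, hx₂, hx₂A, hx₂0⟩ := ih (by omega) (x₁ + 1)
      have hlt : x₁ < x₂ := by linarith
      obtain ⟨c, hc, hc0⟩ := exists_hasDerivAt_eq_zero hlt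
        (fun x hx => (hEder k (by omega) x (le_trans hx₁A hx.1)).continuousAt.continuousWithinAt)
        (hx₁0.trans hx₂0.symm)
        (fun x hx => hEder k (by omega) x (le_trans hx₁A hx.1.le))
      exact ⟨c, le_trans hx₁M hc.1.le, le_trans hx₁A hc.1.le, hc0⟩
  have hqnat : q.natDegree < d+1 := by
    by_cases h : q = 0
    · rw [h]; simp
    · exact (Polynomial.natDegree_lt_iff_degree_lt h).mpr hqdeg
  have hEtop : ∀ t, E (d+1) t = gs (d+1) t := by
    intro t
    have hz : (⇑Polynomial.derivative)^[d+1] q = 0 :=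
      Polynomial.iterate_derivative_eq_zero hqnat
    simp [hEdef, hz]
  -- the germ of gs (d+1) is zero
  have hgerm : ((gs (d+1) : ℝ → ℝ) : RGerm) = 0 := by
    by_contra h0
    obtain ⟨hinv, hinvH, hone⟩ := hH.1 _ (hgH (d+1)) h0
    obtain ⟨u, hu⟩ := Quotient.exists_rep hinv
    have huc : (u : RGerm) = hinv := hu
    have hev : ∀ᶠ t in atTop, gs (d+1) t * u t = 1 := by
      have h1 : ((gs (d+1) * u : ℝ → ℝ) : RGerm) = 1 := by
        rw [Filter.Germ.coe_mul, huc, hone]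
      have h2 := Filter.Germ.coe_eq.mp (h1.trans (Filter.Germ.coe_one).symm)
      filter_upwards [h2] with t ht using ht
    obtain ⟨c₀, hc₀⟩ := eventually_atTop.mp hev
    obtain ⟨x, hx1, hx2, hx3⟩ := zer (d+1) le_rfl c₀
    rw [hEtop] at hx3
    have := hc₀ x hx1
    rw [hx3, zero_mul] at this
    exact zero_ne_one this
  have hEzero : ∀ᶠ t in atTop, gs (d+1) t = 0 := by
    have := Filter.Germ.coe_eq.mp (hgerm.trans (Filter.Germ.coe_zero).symm)
    filter_upwards [this] with t ht using ht
  obtain ⟨b₃', hb₃'⟩ := eventually_atTop.mp hEzero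
  -- downward induction: each E (d+1-k) eventually vanishes
  have down : ∀ k, k ≤ d+1 → ∃ b, A ≤ b ∧ ∀ t, b ≤ t → E (d+1-k) t = 0 := by
    intro k
    induction k with
    | zero =>
      refine fun _ => ⟨max b₃' A, le_max_right _ _, fun t ht => ?_⟩
      rw [Nat.sub_zero, hEtop]
      exact hb₃' t (le_trans (le_max_left _ _) ht)
    | succ k ih =>
      intro hk
      obtain ⟨b, hbA, hb⟩ := ih (by omega)
      have hm1 : d+1-k = (d+1-(k+1)) + 1 := by omega
      refine ⟨b, hbA, fun t ht => ?_⟩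
      obtain ⟨x₀, hx₀t, hx₀A, hx₀0⟩ := zer (d+1-(k+1)) (by omega) (t+1)
      have hlt : t < x₀ := by linarith
      obtain ⟨c, hc, hcs⟩ := exists_hasDerivAt_eq_slope (E (d+1-(k+1))) (E ((d+1-(k+1))+1)) hlt
        (fun x hx => (hEder (d+1-(k+1)) (by omega) x
          (le_trans (le_trans hbA ht) hx.1)).continuousAt.continuousWithinAt)
        (fun x hx => hEder (d+1-(k+1)) (by omega) x (le_trans (le_trans hbA ht) hx.1.le))
      have hczero : E ((d+1-(k+1))+1) c = 0 := by
        rw [← hm1]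
        exact hb c (le_trans ht hc.1.le)
      rw [hczero] at hcs
      have hne : x₀ - t ≠ 0 := by linarith
      have hnum : E (d+1-(k+1)) x₀ - E (d+1-(k+1)) t = 0 := by
        field_simp at hcs
        linarith [hcs]
      rw [hx₀0] at hnum
      linarith
  obtain ⟨b, hbA, hb⟩ := down (d+1) le_rfl
  refine ⟨q, eventually_atTop.mpr ⟨max b A, fun t ht => ?_⟩⟩
  have h0 := hb t (le_trans (le_max_left _ _) ht)
  rw [Nat.sub_self] at h0
  simp only [hEdef, Function.iterate_zero_apply] at h0
  rw [hfg t (le_trans (le_max_right _ _) ht)]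
  linarith [h0]
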